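/- If n = k·ℓ + 1 or n = k·ℓ − 1 for positive integers k, ℓ, then the circulant graph C_n(1, k) is isomorphic to C_n(1, ℓ). -/

import Mathlib

open SimpleGraph

lemma circ_symm_eq {G : Type*} [AddGroup G] {s t : Set G}
    (h : s ∪ (-s) = t ∪ (-t)) : circulantGraph s = circulantGraph t := by
  rw [circulantGraph_eq_symm s, circulantGraph_eq_symm t, h]

lemma unit_mul_injective {R : Type*} [CommRing R] (u : Rˣ) :
    Function.Injective (fun x : R => (u : R) * x) := fun a b hab => by
  simpa [← mul_assoc] using congrArg (fun z => ((u⁻¹ : Rˣ) : R) * z) hab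

/-- Multiplying by a unit gives an isomorphism of circulant graphs. -/
noncomputable def circMulIso {R : Type*} [CommRing R] (u : Rˣ) (s : Set R) :
    circulantGraph s ≃g circulantGraph ((fun x => (u : R) * x) '' s) where
  toEquiv :=
    { toFun := fun x => (u : R) * x
      invFun := fun x => ((u⁻¹ : Rˣ) : R) * x
      left_inv := fun x => by simp [← mul_assoc]
      right_inv := fun x => by simp [← mul_assoc] }
  map_rel_iff' := by
    intro x y
    simp only [Equiv.coe_fn_mk, circulantGraph_adj]
    have hinj := unit_mul_injective u
    have h1 : (u : R) * x - (u : R) * y = (u : R) * (x - y) := by ring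
    have h2 : (u : R) * y - (u : R) * x = (u : R) * (y - x) := by ring
    rw [h1, h2, hinj.mem_set_image, hinj.mem_set_image]
    exact and_congr (not_congr hinj.eq_iff) Iff.rfl

lemma key_iso (n k ℓ : ℕ) (ε : ZMod n) (hε : ε = 1 ∨ ε = -1)
    (hkl : (k : ZMod n) * (ℓ : ZMod n) = ε) :
    Nonempty (circulantGraph ({1, (k : ZMod n)} : Set (ZMod n)) ≃g
      circulantGraph ({1, (ℓ : ZMod n)} : Set (ZMod n))) := by
  have hε2 : ε * ε = 1 := by rcases hε with h | h <;> rw [h] <;> ring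
  let u : (ZMod n)ˣ := ⟨(ℓ : ZMod n), ε * (k : ZMod n),
    by rw [show (ℓ : ZMod n) * (ε * k) = ε * (k * ℓ) by ring, hkl, hε2],
    by rw [show (ε * (k : ZMod n)) * ℓ = ε * (k * ℓ) by ring, hkl, hε2]⟩
  have himg : circulantGraph ((fun x => (u : ZMod n) * x) '' ({1, (k : ZMod n)})) =
      circulantGraph ({1, (ℓ : ZMod n)} : Set (ZMod n)) := by
    apply circ_symm_eq
    have himage : (fun x => (u : ZMod n) * x) '' ({1, (k : ZMod n)}) =
        {(ℓ : ZMod n), ε} := by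
      simp only [Set.image_insert_eq, Set.image_singleton, mul_one]
      show ({(ℓ : ZMod n), (ℓ : ZMod n) * k} : Set (ZMod n)) = _
      rw [show (ℓ : ZMod n) * k = ε by rw [mul_comm]; exact hkl]
    rw [himage]
    ext x
    simp only [Set.mem_union, Set.mem_insert_iff, Set.mem_singleton_iff, Set.mem_neg,
      neg_eq_iff_eq_neg]
    rcases hε with h | h <;> subst h <;>
      constructor <;> rintro (h | h | h | h) <;> simp_all -failIfUnchanged <;> tauto
  exact ⟨(himg ▸ circMulIso u ({1, (k : ZMod n)}))⟩

theorem stmt_3 (n k ℓ : ℕ) (hk : 0 < k) (hℓ : 0 < ℓ)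
    (h : n = k * ℓ + 1 ∨ n + 1 = k * ℓ) :
    Nonempty (circulantGraph ({1, (k : ZMod n)} : Set (ZMod n)) ≃g
      circulantGraph ({1, (ℓ : ZMod n)} : Set (ZMod n))) := by
  rcases h with h | h
  · refine key_iso n k ℓ (-1) (Or.inr rfl) ?_
    have : ((k * ℓ + 1 : ℕ) : ZMod n) = 0 := by rw [← h]; exact ZMod.natCast_self n
    push_cast at this
    linear_combination this
  · refine key_iso n k ℓ 1 (Or.inl rfl) ?_
    have : ((n + 1 : ℕ) : ZMod n) = ((k * ℓ : ℕ) : ZMod n) := by rw [h]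
    push_cast [ZMod.natCast_self] at this
    linear_combination -this
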